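/- Let (X,T) be a topological dynamical system and d ≥ 1. If there exists a generating family for T of cardinality d (i.e. Mult(T) ≤ d), then there exists a continuous, injective, affine map Ψ : M(X) → ([0,1]^d)^ℤ satisfying Ψ ∘ T_* = σ_d ∘ Ψ, where affine means Ψ(tμ + (1−t)ν) = tΨ(μ) + (1−t)Ψ(ν) for all μ, ν ∈ M(X) and t ∈ [0,1]. -/

import Mathlib

open MeasureTheory

/-- Iterates of a homeomorphism, indexed by natural numbers. -/
def hiterN {X : Type*} [TopologicalSpace X] (T : X ≃ₜ X) : ℕ → (X ≃ₜ X)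
  | 0 => Homeomorph.refl X
  | n + 1 => (hiterN T n).trans T

/-- Iterates of a homeomorphism, indexed by integers. -/
def hiter {X : Type*} [TopologicalSpace X] (T : X ≃ₜ X) : ℤ → (X ≃ₜ X)
  | Int.ofNat n => hiterN T n
  | Int.negSucc n => (hiterN T (n + 1)).symm

/-- The set of all iterates `f ∘ Tⁿ` for `f ∈ F` and `n ∈ ℤ`. -/
def iterSet {X : Type*} [TopologicalSpace X] (T : X ≃ₜ X) (F : Set C(X, ℝ)) :
    Set C(X, ℝ) :=
  {h | ∃ f ∈ F, ∃ n : ℤ, h = f.comp (hiter T n : C(X, X))}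

/-- The pushforward action `T_*` induced by a homeomorphism `T` on the space of Borel
probability measures. -/
noncomputable def pushForward {X : Type*} [TopologicalSpace X] [MeasurableSpace X]
    [BorelSpace X] (T : X ≃ₜ X) (μ : ProbabilityMeasure X) : ProbabilityMeasure X :=
  μ.map (f := ⇑T) T.continuous.measurable.aemeasurable

/-- The convex combination `t μ + (1 - t) ν` of two Borel probability measures,
for `0 ≤ t ≤ 1`. -/
noncomputable def convComb {X : Type*} [MeasurableSpace X] (t : NNReal) (ht : t ≤ 1)
    (μ ν : ProbabilityMeasure X) : ProbabilityMeasure X :=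
  ⟨(t : ENNReal) • (μ : Measure X) + ((1 - t : NNReal) : ENNReal) • (ν : Measure X), by
    constructor
    rw [Measure.add_apply, Measure.smul_apply, Measure.smul_apply, measure_univ, measure_univ,
      smul_eq_mul, smul_eq_mul, mul_one, mul_one, ← ENNReal.coe_add,
      add_tsub_cancel_of_le ht, ENNReal.coe_one]⟩

lemma hiterN_comm {X : Type*} [TopologicalSpace X] (T : X ≃ₜ X) (n : ℕ) (x : X) :
    hiterN T n (T x) = T (hiterN T n x) := by
  induction n with
  | zero => rfl
  | succ k ih =>
    show T (hiterN T k (T x)) = T (T (hiterN T k x))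
    rw [ih]

lemma hiter_succ {X : Type*} [TopologicalSpace X] (T : X ≃ₜ X) (n : ℤ) (x : X) :
    hiter T n (T x) = hiter T (n + 1) x := by
  match n with
  | Int.ofNat k =>
    have h1 : (Int.ofNat k) + 1 = Int.ofNat (k + 1) := rfl
    rw [h1]
    show hiterN T k (T x) = hiterN T (k+1) x
    rw [hiterN_comm]
    rfl
  | Int.negSucc 0 =>
    have h1 : (Int.negSucc 0) + 1 = Int.ofNat 0 := rfl
    rw [h1]
    show (hiterN T 1).symm (T x) = x
    have h2 : T x = hiterN T 1 x := rfl
    rw [h2, Homeomorph.symm_apply_apply]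
  | Int.negSucc (k+1) =>
    have h1 : (Int.negSucc (k+1)) + 1 = Int.negSucc k := rfl
    rw [h1]
    show (hiterN T (k+2)).symm (T x) = (hiterN T (k+1)).symm x
    have h2 : T x = hiterN T (k+2) ((hiterN T (k+1)).symm x) := by
      show T x = T (hiterN T (k+1) ((hiterN T (k+1)).symm x))
      rw [Homeomorph.apply_symm_apply]
    rw [h2, Homeomorph.symm_apply_apply]

/-- If a topological dynamical system `(X, T)` admits a generating family of cardinality
`d ≥ 1` (i.e. `Mult(T) ≤ d`), then the induced system `(M(X), T_*)` embeds affinely and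
equivariantly in the cubical shift `(([0,1]^d)^ℤ, σ_d)`. -/
theorem affine_embedding_of_generating_family
    {X : Type*} [MetricSpace X] [CompactSpace X] [MeasurableSpace X] [BorelSpace X]
    (T : X ≃ₜ X) (d : ℕ) (hd : 1 ≤ d)
    (hgen : ∃ F : Finset C(X, ℝ), F.card = d ∧
      Dense (Submodule.span ℝ (iterSet T (F : Set C(X, ℝ))) : Set C(X, ℝ))) :
    ∃ Ψ : ProbabilityMeasure X → (ℤ → Fin d → unitInterval),
      Continuous Ψ ∧ Function.Injective Ψ ∧
      (∀ μ : ProbabilityMeasure X, Ψ (pushForward T μ) = fun n => Ψ μ (n + 1)) ∧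
      (∀ (μ ν : ProbabilityMeasure X) (t : NNReal) (ht : t ≤ 1) (n : ℤ) (i : Fin d),
        (Ψ (convComb t ht μ ν) n i : ℝ)
          = (t : ℝ) * (Ψ μ n i : ℝ) + (1 - (t : ℝ)) * (Ψ ν n i : ℝ)) := by
  classical
  obtain ⟨F, hcard, hdense⟩ := hgen
  set e : {x // x ∈ F} ≃ Fin d := F.equivFin.trans (finCongr hcard) with he
  set f : Fin d → C(X, ℝ) := fun i => (e.symm i : C(X, ℝ)) with hf
  set c : Fin d → ℝ := fun i => ‖f i‖ + 1 with hc
  have hcpos : ∀ i, 0 < c i := fun i => by positivity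
  -- integrability of continuous functions
  have hint : ∀ (g : C(X, ℝ)) (κ : Measure X) [IsFiniteMeasure κ],
      Integrable (fun x => g x) κ := by
    intro g κ _
    exact g.continuous.integrable_of_hasCompactSupport ((isClosed_tsupport _).isCompact)
  -- the integral bound
  have hIb : ∀ (g : C(X, ℝ)) (κ : Measure X) [IsProbabilityMeasure κ],
      |∫ x, g x ∂κ| ≤ ‖g‖ := by
    intro g κ _
    have := norm_integral_le_of_norm_le_const (μ := κ) (f := fun x => g x) (C := ‖g‖)
      (Filter.Eventually.of_forall fun x => g.norm_coe_le_norm x)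
    simpa [Real.norm_eq_abs] using this
  -- the raw values
  set val : ProbabilityMeasure X → ℤ → Fin d → ℝ :=
    fun μ n i => (∫ x, f i (hiter T n x) ∂(μ : Measure X)) / (2 * c i) + 1/2 with hval
  have hmem : ∀ μ n i, val μ n i ∈ unitInterval := by
    intro μ n i
    have hb : |∫ x, f i (hiter T n x) ∂(μ : Measure X)| ≤ ‖f i‖ := by
      have := hIb ((f i).comp (hiter T n : C(X, X))) (μ : Measure X)
      have hnorm : ‖(f i).comp (hiter T n : C(X, X))‖ ≤ ‖f i‖ := by
        apply ContinuousMap.norm_le _ (norm_nonneg _) |>.mpr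
        intro x
        exact (f i).norm_coe_le_norm _
      calc |∫ x, f i (hiter T n x) ∂(μ : Measure X)|
          ≤ ‖(f i).comp (hiter T n : C(X, X))‖ := this
        _ ≤ ‖f i‖ := hnorm
    obtain ⟨hb1, hb2⟩ := abs_le.mp hb
    have hcp := hcpos i
    constructor
    · simp only [hval]
      have : -(c i) ≤ ∫ x, f i (hiter T n x) ∂(μ : Measure X) := by
        simp only [hc]; linarith
      rw [div_add' _ _ _ (by positivity)]
      apply div_nonneg _ (by positivity)
      nlinarith
    · simp only [hval]
      rw [div_add' _ _ _ (by positivity), div_le_one (by positivity)]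
      simp only [hc] at *
      nlinarith
  set Ψ : ProbabilityMeasure X → (ℤ → Fin d → unitInterval) :=
    fun μ n i => ⟨val μ n i, hmem μ n i⟩ with hΨ
  -- continuity of integration against a fixed continuous function
  have cont_int : ∀ g : C(X, ℝ),
      Continuous (fun μ : ProbabilityMeasure X => ∫ x, g x ∂(μ : Measure X)) := by
    intro g
    rw [continuous_iff_continuousAt]
    intro μ
    have key := ProbabilityMeasure.tendsto_iff_forall_integral_tendsto.mp
      (Filter.tendsto_id (x := nhds μ)) (BoundedContinuousFunction.mkOfCompact g)
    simpa [ContinuousAt] using key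
  refine ⟨Ψ, ?_, ?_, ?_, ?_⟩
  · -- continuity
    apply continuous_pi; intro n
    apply continuous_pi; intro i
    apply Continuous.subtype_mk
    exact ((cont_int ((f i).comp (hiter T n : C(X, X)))).div_const _).add continuous_const
  · -- injectivity
    intro μ ν h
    have hvals : ∀ n i, ∫ x, f i (hiter T n x) ∂(μ : Measure X)
        = ∫ x, f i (hiter T n x) ∂(ν : Measure X) := by
      intro n i
      have h1 : val μ n i = val ν n i := by
        have := congrFun (congrFun h n) i
        exact Subtype.ext_iff.mp this
      have hcp : (2 : ℝ) * c i ≠ 0 := by positivity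
      simp only [hval] at h1
      field_simp at h1
      rw [add_left_inj, div_left_inj' (hcpos i).ne'] at h1
      linarith
    -- the set of functions with equal integrals
    set S : Set C(X, ℝ) :=
      {g | ∫ x, g x ∂(μ : Measure X) = ∫ x, g x ∂(ν : Measure X)} with hS
    have hSclosed : IsClosed S := by
      have lip : ∀ (κ : Measure X) [IsProbabilityMeasure κ],
          Continuous (fun g : C(X, ℝ) => ∫ x, g x ∂κ) := by
        intro κ _
        apply LipschitzWith.continuous (K := 1)
        apply LipschitzWith.of_dist_le_mul
        intro g₁ g₂
        rw [NNReal.coe_one, one_mul, Real.dist_eq, ← integral_sub (hint g₁ κ) (hint g₂ κ)]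
        have : ∀ x, ‖g₁ x - g₂ x‖ ≤ dist g₁ g₂ := by
          intro x
          rw [Real.norm_eq_abs, ← Real.dist_eq]
          exact ContinuousMap.dist_apply_le_dist x
        have := norm_integral_le_of_norm_le_const (μ := κ)
          (f := fun x => g₁ x - g₂ x) (C := dist g₁ g₂)
          (Filter.Eventually.of_forall this)
        simpa [Real.norm_eq_abs] using this
      have : S = (fun g : C(X, ℝ) =>
          (∫ x, g x ∂(μ : Measure X)) - ∫ x, g x ∂(ν : Measure X)) ⁻¹' {0} := by
        ext g; simp [hS, sub_eq_zero]
      rw [this]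
      exact IsClosed.preimage ((lip (μ : Measure X)).sub (lip (ν : Measure X)))
        isClosed_singleton
    have hsub : (Submodule.span ℝ (iterSet T (F : Set C(X, ℝ))) : Set C(X, ℝ)) ⊆ S := by
      intro g hg
      induction hg using Submodule.span_induction with
      | mem x hx =>
        obtain ⟨f₀, hf₀, n, rfl⟩ := hx
        have : f₀ = f (e ⟨f₀, hf₀⟩) := by simp [hf]
        rw [this]
        exact hvals n (e ⟨f₀, hf₀⟩)
      | zero => simp [hS]
      | add x y _ _ hx hy =>
        simp only [hS, Set.mem_setOf_eq, ContinuousMap.add_apply] at *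
        rw [integral_add (hint x _) (hint y _), integral_add (hint x _) (hint y _), hx, hy]
      | smul a x _ hx =>
        simp only [hS, Set.mem_setOf_eq, ContinuousMap.smul_apply, smul_eq_mul] at *
        rw [integral_const_mul, integral_const_mul, hx]
    have hall : ∀ g : C(X, ℝ), ∫ x, g x ∂(μ : Measure X) = ∫ x, g x ∂(ν : Measure X) := by
      intro g
      exact closure_minimal hsub hSclosed (hdense g)
    apply ProbabilityMeasure.toMeasure_injective
    apply ext_of_forall_lintegral_eq_of_IsFiniteMeasure (μ := (μ : Measure X))
    intro fb
    set gfb : C(X, ℝ) := ⟨fun x => (fb x : ℝ), NNReal.continuous_coe.comp fb.continuous⟩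
    have hibμ : Integrable (fun x => ((fb x : ℝ))) (↑μ : Measure X) := hint gfb _
    have hibν : Integrable (fun x => ((fb x : ℝ))) (↑ν : Measure X) := hint gfb _
    rw [lintegral_coe_eq_integral _ hibμ, lintegral_coe_eq_integral _ hibν]
    exact congrArg ENNReal.ofReal (hall gfb)
  · -- equivariance
    intro μ
    funext n i
    apply Subtype.ext
    show val (pushForward T μ) n i = val μ (n + 1) i
    have hcoe : ((pushForward T μ : ProbabilityMeasure X) : Measure X)
        = (μ : Measure X).map T := by
      simp [pushForward]
    simp only [hval]
    have hasm : AEStronglyMeasurable (fun x => (f i) ((hiter T n) x))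
        ((μ : Measure X).map T) :=
      ((f i).continuous.comp (hiter T n).continuous).aestronglyMeasurable
    rw [hcoe, integral_map T.continuous.measurable.aemeasurable hasm]
    simp_rw [hiter_succ]
  · -- affinity
    intro μ ν t ht n i
    show val (convComb t ht μ ν) n i = t * val μ n i + (1 - (t : ℝ)) * val ν n i
    have hcoe : ((convComb t ht μ ν : ProbabilityMeasure X) : Measure X)
        = (t : ENNReal) • (μ : Measure X) + ((1 - t : NNReal) : ENNReal) • (ν : Measure X) :=
      rfl
    have ht' : ((1 - t : NNReal) : ℝ) = 1 - (t : ℝ) := by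
      rw [NNReal.coe_sub ht, NNReal.coe_one]
    simp only [hval]
    have h1 : Integrable (fun x => (f i) ((hiter T n) x)) ((t : ENNReal) • (μ : Measure X)) :=
      (hint ((f i).comp (hiter T n : C(X, X))) (μ : Measure X)).smul_measure ENNReal.coe_ne_top
    have h2 : Integrable (fun x => (f i) ((hiter T n) x))
        (((1 - t : NNReal) : ENNReal) • (ν : Measure X)) :=
      (hint ((f i).comp (hiter T n : C(X, X))) (ν : Measure X)).smul_measure ENNReal.coe_ne_top
    rw [hcoe, integral_add_measure h1 h2, integral_smul_measure, integral_smul_measure]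
    simp only [ENNReal.coe_toReal, smul_eq_mul, ht']
    have hcp : (2 : ℝ) * c i ≠ 0 := by positivity
    field_simp
    ring
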